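/- Let A be a commutative K-algebra, D(A)_{[0]} := {δ ∈ D(A) : δ(1) = 0} (the annihilator of 1 ∈ A, a left ideal of D(A) with D(A) = A ⊕ D(A)_{[0]} as left A-modules), and D(A)*A := {Σ_j δ_j(a_j) : δ_j ∈ D(A)_{[0]}, a_j ∈ A}. Then: (i) the map 𝔞 ↦ 𝔞 + D(A)_{[0]} is a bijection from the set of D(A)-stable ideals of A containing D(A)*A onto the set of two-sided ideals of D(A) containing D(A)_{[0]}, with inverse I ↦ I ∩ A; (ii) the two-sided ideal D(A)·D(A)_{[0]}·D(A) generated by D(A)_{[0]} equals D(A)*A + D(A)_{[0]} and is the least two-sided ideal of D(A) containing D(A)_{[0]}; (iii) D(A)*A = A ∩ D(A)·D(A)_{[0]}·D(A) is a D(A)-stable ideal of A. -/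

import Mathlib

/-- `DO K A i` is the set of differential operators on `A` of order `≤ i`. -/
def DO (K A : Type*) [CommSemiring K] [CommRing A] [Algebra K A] :
    ℕ → Set (Module.End K A)
  | 0 => {u | ∀ r : A, Algebra.lmul K A r * u = u * Algebra.lmul K A r}
  | i + 1 => {u | ∀ r : A, Algebra.lmul K A r * u - u * Algebra.lmul K A r ∈ DO K A i}

/-- `I` is a two-sided ideal of the (sub)ring with carrier set `S`. -/
def IsIdl {E : Type*} [Ring E] (S I : Set E) : Prop :=
  I ⊆ S ∧ (0 : E) ∈ I ∧ (∀ x ∈ I, ∀ y ∈ I, x + y ∈ I) ∧ (∀ x ∈ I, -x ∈ I) ∧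
    ∀ t ∈ S, ∀ x ∈ I, t * x ∈ I ∧ x * t ∈ I

theorem mem_of_eq {α : Type*} {S : Set α} {y z : α} (h : y = z) (hz : z ∈ S) : y ∈ S :=
  h ▸ hz

section RingIds
variable {R : Type*} [Ring R]
theorem g0 (r : R) : r * 0 - 0 * r = 0 := by noncomm_ring
theorem g1 (r u v : R) : r*(u+v) - (u+v)*r = (r*u - u*r) + (r*v - v*r) := by noncomm_ring
theorem g2 (r u : R) : r*(-u) - (-u)*r = -(r*u - u*r) := by noncomm_ring
theorem g2' (r u : R) (h : r * u = u * r) : r * -u = -u * r := by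
  rw [mul_neg, neg_mul, h]
theorem g3 (r u v : R) : r*(u*v) - (u*v)*r = (r*u - u*r)*v + u*(r*v - v*r) := by noncomm_ring
theorem g4 (t p d q : R) : t*(p+d) = q + ((t*p - q) + t*d) := by noncomm_ring
theorem g5 (p d t T q : R) : (p+d)*t = (p*T + q) + (p*(t - T) + ((d*T - q) + d*(t - T))) := by
  noncomm_ring
theorem g6 (u d v T q : R) : u*d*v = q + ((u*d*T - q) + u*d*(v - T)) := by noncomm_ring
theorem g9 (a b : R) : b = a + -(a - b) := by noncomm_ring
theorem g10 (a b : R) : b = a - (a - b) := by noncomm_ring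
theorem g11 (b a : R) : b = a + (b - a) := by noncomm_ring
theorem g13 (d : R) : d = 1 * d * 1 := by noncomm_ring
theorem g14 (e T : R) : e * T = 1 * e * T := by noncomm_ring
theorem g16 (t u d v : R) : t * (u*d*v) = t*u*d*v := by noncomm_ring
theorem g17 (t u d v : R) : u*d*v*t = u*d*(v*t) := by noncomm_ring
theorem g18 (t x : R) : t * -x = -(t * x) := by noncomm_ring
theorem g19 (t x : R) : -x * t = -(x * t) := by noncomm_ring
theorem g20 (t : R) : t * 0 = 0 := by noncomm_ring
theorem g21 (t : R) : 0 * t = 0 := by noncomm_ring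
theorem g22 (t x y : R) : t * (x + y) = t * x + t * y := by noncomm_ring
theorem g23 (t x y : R) : (x + y) * t = x * t + y * t := by noncomm_ring
end RingIds

section Aux
variable {K A : Type*} [Field K] [CommRing A] [Algebra K A]
local notation "L" => Algebra.lmul K A

theorem lapp (a b : A) : L a b = a * b := by simp [Algebra.coe_lmul_eq_mul]

theorem mem_DO_zero {u : Module.End K A} :
    u ∈ DO K A 0 ↔ ∀ r : A, L r * u = u * L r := Iff.rfl

theorem mem_DO_succ {i : ℕ} {u : Module.End K A} :
    u ∈ DO K A (i + 1) ↔ ∀ r : A, L r * u - u * L r ∈ DO K A i := Iff.rfl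

theorem do_zero (i : ℕ) : (0 : Module.End K A) ∈ DO K A i := by
  induction i with
  | zero => rw [mem_DO_zero]; intro r; exact (mul_zero _).trans (zero_mul _).symm
  | succ i ih => rw [mem_DO_succ]; intro r; exact mem_of_eq (g0 (L r)) ih

theorem do_add {i : ℕ} {u v : Module.End K A} (hu : u ∈ DO K A i) (hv : v ∈ DO K A i) :
    u + v ∈ DO K A i := by
  induction i generalizing u v with
  | zero =>
    rw [mem_DO_zero] at hu hv ⊢
    intro r; rw [mul_add, add_mul, hu r, hv r]
  | succ i ih =>
    rw [mem_DO_succ] at hu hv ⊢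
    intro r
    exact mem_of_eq (g1 (L r) u v) (ih (hu r) (hv r))

theorem do_neg {i : ℕ} {u : Module.End K A} (hu : u ∈ DO K A i) : -u ∈ DO K A i := by
  induction i generalizing u with
  | zero =>
    rw [mem_DO_zero] at hu ⊢
    intro r
    exact g2' (L r) u (hu r)
  | succ i ih =>
    rw [mem_DO_succ] at hu ⊢
    intro r
    exact mem_of_eq (g2 (L r) u) (ih (hu r))

theorem do_succ {i : ℕ} : DO K A i ⊆ DO K A (i + 1) := by
  induction i with
  | zero =>
    intro u hu
    rw [mem_DO_zero] at hu
    rw [mem_DO_succ]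
    intro r
    exact mem_of_eq (sub_eq_zero_of_eq (hu r)) (do_zero 0)
  | succ i ih =>
    intro u hu
    rw [mem_DO_succ] at hu ⊢
    intro r
    exact ih (hu r)

theorem do_le {i j : ℕ} (h : i ≤ j) : DO K A i ⊆ DO K A j := by
  induction h with
  | refl => exact subset_rfl
  | step _ ih => exact ih.trans do_succ

theorem do_mul_aux (n : ℕ) : ∀ i j, i + j = n → ∀ u v : Module.End K A,
    u ∈ DO K A i → v ∈ DO K A j → u * v ∈ DO K A n := by
  induction n with
  | zero =>
    intro i j hij u v hu hv
    have hi : i = 0 := by omega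
    have hj : j = 0 := by omega
    subst hi hj
    rw [mem_DO_zero] at hu hv ⊢
    intro r
    rw [← mul_assoc, hu r, mul_assoc, hv r, mul_assoc]
  | succ n ih =>
    intro i j hij u v hu hv
    rw [mem_DO_succ]
    intro r
    rcases i with _ | i
    · have h0 : L r * u - u * L r = 0 := sub_eq_zero_of_eq (mem_DO_zero.mp hu r)
      have hj : j = n + 1 := by omega
      subst hj
      refine mem_of_eq (g3 (L r) u v) (do_add (mem_of_eq ?_ (do_zero n))
        (ih 0 n (by omega) u _ hu (mem_DO_succ.mp hv r)))
      rw [h0, zero_mul]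
    · have h1 : (L r * u - u * L r) * v ∈ DO K A n :=
        ih i j (by omega) _ v (mem_DO_succ.mp hu r) hv
      have h2 : u * (L r * v - v * L r) ∈ DO K A n := by
        rcases j with _ | j
        · have h0 : L r * v - v * L r = 0 := sub_eq_zero_of_eq (mem_DO_zero.mp hv r)
          refine mem_of_eq ?_ (do_zero n)
          rw [h0, mul_zero]
        · exact ih (i + 1) j (by omega) u _ hu (mem_DO_succ.mp hv r)
      exact mem_of_eq (g3 (L r) u v) (do_add h1 h2)

theorem do_mul {i j : ℕ} {u v : Module.End K A} (hu : u ∈ DO K A i) (hv : v ∈ DO K A j) :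
    u * v ∈ DO K A (i + j) := do_mul_aux (i + j) i j rfl u v hu hv

theorem DA_lmul (a : A) : Algebra.lmul K A a ∈ ⋃ i, DO K A i := by
  refine Set.mem_iUnion.2 ⟨0, mem_DO_zero.2 fun r => ?_⟩
  have h : L (r * a) = L r * L a := map_mul _ _ _
  have h2 : L (a * r) = L a * L r := map_mul _ _ _
  rw [← h, ← h2, mul_comm r a]

theorem DA_one : (1 : Module.End K A) ∈ ⋃ i, DO K A i :=
  Set.mem_iUnion.2 ⟨0, mem_DO_zero.2 fun r => (mul_one _).trans (one_mul _).symm⟩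

theorem DA_zero : (0 : Module.End K A) ∈ ⋃ i, DO K A i := Set.mem_iUnion.2 ⟨0, do_zero 0⟩

theorem DA_add {u v : Module.End K A} (hu : u ∈ ⋃ i, DO K A i) (hv : v ∈ ⋃ i, DO K A i) :
    u + v ∈ ⋃ i, DO K A i := by
  obtain ⟨i, hi⟩ := Set.mem_iUnion.1 hu
  obtain ⟨j, hj⟩ := Set.mem_iUnion.1 hv
  exact Set.mem_iUnion.2
    ⟨max i j, do_add (do_le (le_max_left i j) hi) (do_le (le_max_right i j) hj)⟩

theorem DA_neg {u : Module.End K A} (hu : u ∈ ⋃ i, DO K A i) : -u ∈ ⋃ i, DO K A i := by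
  obtain ⟨i, hi⟩ := Set.mem_iUnion.1 hu
  exact Set.mem_iUnion.2 ⟨i, do_neg hi⟩

theorem DA_sub {u v : Module.End K A} (hu : u ∈ ⋃ i, DO K A i) (hv : v ∈ ⋃ i, DO K A i) :
    u - v ∈ ⋃ i, DO K A i :=
  mem_of_eq (sub_eq_add_neg u v) (DA_add hu (DA_neg hv))

theorem DA_mul {u v : Module.End K A} (hu : u ∈ ⋃ i, DO K A i) (hv : v ∈ ⋃ i, DO K A i) :
    u * v ∈ ⋃ i, DO K A i := by
  obtain ⟨i, hi⟩ := Set.mem_iUnion.1 hu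
  obtain ⟨j, hj⟩ := Set.mem_iUnion.1 hv
  exact Set.mem_iUnion.2 ⟨i + j, do_mul hi hj⟩

theorem D0_zero : (0 : Module.End K A) ∈ {u : Module.End K A | u ∈ ⋃ i, DO K A i ∧ u 1 = 0} :=
  ⟨DA_zero, rfl⟩

theorem D0_add {u v : Module.End K A}
    (hu : u ∈ {u : Module.End K A | u ∈ ⋃ i, DO K A i ∧ u 1 = 0})
    (hv : v ∈ {u : Module.End K A | u ∈ ⋃ i, DO K A i ∧ u 1 = 0}) :
    u + v ∈ {u : Module.End K A | u ∈ ⋃ i, DO K A i ∧ u 1 = 0} := by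
  refine ⟨DA_add hu.1 hv.1, ?_⟩
  rw [LinearMap.add_apply, hu.2, hv.2]
  exact add_zero 0

theorem D0_neg {u : Module.End K A}
    (hu : u ∈ {u : Module.End K A | u ∈ ⋃ i, DO K A i ∧ u 1 = 0}) :
    -u ∈ {u : Module.End K A | u ∈ ⋃ i, DO K A i ∧ u 1 = 0} := by
  refine ⟨DA_neg hu.1, ?_⟩
  rw [LinearMap.neg_apply, hu.2]
  exact neg_zero

theorem D0_mul_left {t d : Module.End K A} (ht : t ∈ ⋃ i, DO K A i)
    (hd : d ∈ {u : Module.End K A | u ∈ ⋃ i, DO K A i ∧ u 1 = 0}) :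
    t * d ∈ {u : Module.End K A | u ∈ ⋃ i, DO K A i ∧ u 1 = 0} := by
  refine ⟨DA_mul ht hd.1, ?_⟩
  rw [Module.End.mul_apply, hd.2, map_zero]

theorem key {u : Module.End K A} (hu : u ∈ ⋃ i, DO K A i) (a : A) :
    u * Algebra.lmul K A a - Algebra.lmul K A (u a)
      ∈ {u : Module.End K A | u ∈ ⋃ i, DO K A i ∧ u 1 = 0} := by
  refine ⟨DA_sub (DA_mul hu (DA_lmul a)) (DA_lmul (u a)), ?_⟩
  rw [LinearMap.sub_apply, Module.End.mul_apply, lapp, lapp, mul_one a, mul_one (u a)]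
  exact sub_self _

theorem decomp {u : Module.End K A} (hu : u ∈ ⋃ i, DO K A i) :
    u - Algebra.lmul K A (u 1) ∈ {u : Module.End K A | u ∈ ⋃ i, DO K A i ∧ u 1 = 0} := by
  refine ⟨DA_sub hu (DA_lmul (u 1)), ?_⟩
  rw [LinearMap.sub_apply, lapp, mul_one (u 1)]
  exact sub_self _

end Aux

/-- Let `A` be a commutative `K`-algebra, `D(A)_{[0]} = {δ ∈ D(A) : δ(1) = 0}` and
`D(A)*A = {Σ_j δ_j(a_j) : δ_j ∈ D(A)_{[0]}, a_j ∈ A}`.  Then: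
(i) `𝔞 ↦ 𝔞 + D(A)_{[0]}` is a bijection from the `D(A)`-stable ideals of `A` containing
`D(A)*A` onto the two-sided ideals of `D(A)` containing `D(A)_{[0]}`, with inverse
`I ↦ I ∩ A`;
(ii) `D(A)·D(A)_{[0]}·D(A) = D(A)*A + D(A)_{[0]}` and it is the least two-sided ideal of
`D(A)` containing `D(A)_{[0]}`;
(iii) `D(A)*A = A ∩ D(A)·D(A)_{[0]}·D(A)` is a `D(A)`-stable ideal of `A`. -/
theorem ideals_containing_annihilator_of_one
    {K A : Type*} [Field K] [CommRing A] [Algebra K A]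
    (DA : Set (Module.End K A)) (hDA : DA = ⋃ i, DO K A i)
    -- `D(A)_{[0]}`, the annihilator of `1 ∈ A`:
    (D0 : Set (Module.End K A)) (hD0 : D0 = {u | u ∈ DA ∧ u 1 = 0})
    -- `D(A)*A`, the set of finite sums `Σ δ_j(a_j)` with `δ_j ∈ D(A)_{[0]}`:
    (Dstar : Set A)
    (hDstar : Dstar = (AddSubgroup.closure {x : A | ∃ u ∈ D0, ∃ a : A, x = u a} :
      AddSubgroup A))
    -- `D(A)·D(A)_{[0]}·D(A)`, the two-sided ideal of `D(A)` generated by `D(A)_{[0]}`: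
    (DD0D : Set (Module.End K A))
    (hDD0D : DD0D = (AddSubgroup.closure
      {x : Module.End K A | ∃ u ∈ DA, ∃ d ∈ D0, ∃ v ∈ DA, x = u * d * v} :
        AddSubgroup (Module.End K A))) :
    -- (i) the map `𝔞 ↦ 𝔞 + D(A)_{[0]}`:
    (∀ 𝔞 : Ideal A, (∀ u ∈ DA, ∀ a ∈ 𝔞, u a ∈ 𝔞) → Dstar ⊆ (𝔞 : Set A) →
      IsIdl DA {x | ∃ a ∈ 𝔞, ∃ d ∈ D0, x = Algebra.lmul K A a + d} ∧
      D0 ⊆ {x | ∃ a ∈ 𝔞, ∃ d ∈ D0, x = Algebra.lmul K A a + d} ∧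
      {r : A | Algebra.lmul K A r ∈ {x | ∃ a ∈ 𝔞, ∃ d ∈ D0, x = Algebra.lmul K A a + d}}
        = (𝔞 : Set A)) ∧
    -- (i) its inverse `I ↦ I ∩ A`:
    (∀ I : Set (Module.End K A), IsIdl DA I → D0 ⊆ I →
      ∃ 𝔞 : Ideal A, (𝔞 : Set A) = {r : A | Algebra.lmul K A r ∈ I} ∧
        (∀ u ∈ DA, ∀ a ∈ 𝔞, u a ∈ 𝔞) ∧ Dstar ⊆ (𝔞 : Set A) ∧
        I = {x | ∃ a ∈ 𝔞, ∃ d ∈ D0, x = Algebra.lmul K A a + d}) ∧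
    -- (ii) `D(A)·D(A)_{[0]}·D(A) = D(A)*A + D(A)_{[0]}` …
    DD0D = {x | ∃ s ∈ Dstar, ∃ d ∈ D0, x = Algebra.lmul K A s + d} ∧
    -- … and it is the least two-sided ideal of `D(A)` containing `D(A)_{[0]}`:
    (IsIdl DA DD0D ∧ D0 ⊆ DD0D ∧
      ∀ I : Set (Module.End K A), IsIdl DA I → D0 ⊆ I → DD0D ⊆ I) ∧
    -- (iii) `D(A)*A = A ∩ D(A)·D(A)_{[0]}·D(A)` is a `D(A)`-stable ideal of `A`:
    (Dstar = {r : A | Algebra.lmul K A r ∈ DD0D} ∧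
      (∃ J : Ideal A, (J : Set A) = Dstar) ∧
      ∀ u ∈ DA, ∀ a ∈ Dstar, u a ∈ Dstar) := by
  have L0 : ∀ a : A, Algebra.lmul K A a ∈ DA := fun a => by rw [hDA]; exact DA_lmul a
  have Lone : (1 : Module.End K A) ∈ DA := by rw [hDA]; exact DA_one
  have DAzero : (0 : Module.End K A) ∈ DA := by rw [hDA]; exact DA_zero
  have DAadd : ∀ {u v : Module.End K A}, u ∈ DA → v ∈ DA → u + v ∈ DA := fun {u v} hu hv => by
    rw [hDA] at hu hv ⊢; exact DA_add hu hv
  have DAneg : ∀ {u : Module.End K A}, u ∈ DA → -u ∈ DA := fun {u} hu => by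
    rw [hDA] at hu ⊢; exact DA_neg hu
  have DAmul : ∀ {u v : Module.End K A}, u ∈ DA → v ∈ DA → u * v ∈ DA := fun {u v} hu hv => by
    rw [hDA] at hu hv ⊢; exact DA_mul hu hv
  have D0DA : ∀ {d : Module.End K A}, d ∈ D0 → d ∈ DA := fun {d} hd => by
    rw [hD0] at hd; exact hd.1
  have D0app : ∀ {d : Module.End K A}, d ∈ D0 → d 1 = 0 := fun {d} hd => by
    rw [hD0] at hd; exact hd.2
  have D0zero : (0 : Module.End K A) ∈ D0 := by rw [hD0, hDA]; exact D0_zero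
  have D0add : ∀ {u v : Module.End K A}, u ∈ D0 → v ∈ D0 → u + v ∈ D0 := fun {u v} hu hv => by
    rw [hD0, hDA] at hu hv ⊢; exact D0_add hu hv
  have D0neg : ∀ {u : Module.End K A}, u ∈ D0 → -u ∈ D0 := fun {u} hu => by
    rw [hD0, hDA] at hu ⊢; exact D0_neg hu
  have D0mul : ∀ {t d : Module.End K A}, t ∈ DA → d ∈ D0 → t * d ∈ D0 := fun {t d} ht hd => by
    rw [hDA] at ht; rw [hD0, hDA] at hd ⊢; exact D0_mul_left ht hd
  have keyL : ∀ {u : Module.End K A}, u ∈ DA → ∀ a : A,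
      u * Algebra.lmul K A a - Algebra.lmul K A (u a) ∈ D0 := fun {u} hu a => by
    rw [hDA] at hu; rw [hD0, hDA]; exact key hu a
  have decompL : ∀ {u : Module.End K A}, u ∈ DA →
      u - Algebra.lmul K A (u 1) ∈ D0 := fun {u} hu => by
    rw [hDA] at hu; rw [hD0, hDA]; exact decomp hu
  have DstarGen : ∀ {d : Module.End K A}, d ∈ D0 → ∀ b : A, d b ∈ Dstar := fun {d} hd b => by
    rw [hDstar]; exact AddSubgroup.subset_closure ⟨d, hd, b, rfl⟩
  have DstarZero : (0 : A) ∈ Dstar := by rw [hDstar]; exact AddSubgroup.zero_mem _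
  have DstarAdd : ∀ {x y : A}, x ∈ Dstar → y ∈ Dstar → x + y ∈ Dstar := fun {x y} hx hy => by
    rw [hDstar] at hx hy ⊢; exact AddSubgroup.add_mem _ hx hy
  have DstarNeg : ∀ {x : A}, x ∈ Dstar → -x ∈ Dstar := fun {x} hx => by
    rw [hDstar] at hx ⊢; exact AddSubgroup.neg_mem _ hx
  have DDgen : ∀ {u d v : Module.End K A}, u ∈ DA → d ∈ D0 → v ∈ DA →
      u * d * v ∈ DD0D := fun {u d v} hu hd hv => by
    rw [hDD0D]; exact AddSubgroup.subset_closure ⟨u, hu, d, hd, v, hv, rfl⟩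
  have DDzero : (0 : Module.End K A) ∈ DD0D := by rw [hDD0D]; exact AddSubgroup.zero_mem _
  have DDadd : ∀ {x y : Module.End K A}, x ∈ DD0D → y ∈ DD0D → x + y ∈ DD0D :=
    fun {x y} hx hy => by rw [hDD0D] at hx hy ⊢; exact AddSubgroup.add_mem _ hx hy
  have DDneg : ∀ {x : Module.End K A}, x ∈ DD0D → -x ∈ DD0D := fun {x} hx => by
    rw [hDD0D] at hx ⊢; exact AddSubgroup.neg_mem _ hx
  have DDsub : ∀ {x y : Module.End K A}, x ∈ DD0D → y ∈ DD0D → x - y ∈ DD0D :=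
    fun {x y} hx hy => by rw [hDD0D] at hx hy ⊢; exact AddSubgroup.sub_mem _ hx hy
  have stab : ∀ u ∈ DA, ∀ a ∈ Dstar, u a ∈ Dstar := by
    intro u hu a ha
    rw [hDstar] at ha
    replace ha : a ∈ AddSubgroup.closure {x : A | ∃ u ∈ D0, ∃ a : A, x = u a} := ha
    induction ha using AddSubgroup.closure_induction with
    | mem x hx =>
      obtain ⟨d, hd, b, rfl⟩ := hx
      exact DstarGen (D0mul hu hd) b
    | zero => exact mem_of_eq (map_zero u) DstarZero
    | add x y _ _ hx hy => exact mem_of_eq (map_add u x y) (DstarAdd hx hy)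
    | neg x _ hx => exact mem_of_eq (map_neg u x) (DstarNeg hx)
  have hLmem : ∀ {s : A}, s ∈ Dstar → Algebra.lmul K A s ∈ DD0D := by
    intro s hs
    rw [hDstar] at hs
    replace hs : s ∈ AddSubgroup.closure {x : A | ∃ u ∈ D0, ∃ a : A, x = u a} := hs
    induction hs using AddSubgroup.closure_induction with
    | mem x hx =>
      obtain ⟨e, he, b, rfl⟩ := hx
      have h1 : e * Algebra.lmul K A b ∈ DD0D :=
        mem_of_eq (g14 e (Algebra.lmul K A b)) (DDgen Lone he (L0 b))
      have h2 : e * Algebra.lmul K A b - Algebra.lmul K A (e b) ∈ DD0D :=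
        mem_of_eq (g13 _) (DDgen Lone (keyL (D0DA he) b) Lone)
      exact mem_of_eq (g10 (e * Algebra.lmul K A b) (Algebra.lmul K A (e b))) (DDsub h1 h2)
    | zero => exact mem_of_eq (map_zero (Algebra.lmul K A)) DDzero
    | add x y _ _ hx hy => exact mem_of_eq (map_add (Algebra.lmul K A) x y) (DDadd hx hy)
    | neg x _ hx => exact mem_of_eq (map_neg (Algebra.lmul K A) x) (DDneg hx)
  have hii : DD0D = {x | ∃ s ∈ Dstar, ∃ d ∈ D0, x = Algebra.lmul K A s + d} := by
    apply Set.Subset.antisymm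
    · intro x hx
      rw [hDD0D] at hx
      replace hx : x ∈ AddSubgroup.closure
          {x : Module.End K A | ∃ u ∈ DA, ∃ d ∈ D0, ∃ v ∈ DA, x = u * d * v} := hx
      induction hx using AddSubgroup.closure_induction with
      | mem x hx =>
        obtain ⟨u, hu, d, hd, v, hv, rfl⟩ := hx
        exact ⟨(u * d) (v 1), DstarGen (D0mul hu hd) (v 1),
          u * d * Algebra.lmul K A (v 1) - Algebra.lmul K A ((u * d) (v 1))
            + u * d * (v - Algebra.lmul K A (v 1)),
          D0add (keyL (DAmul hu (D0DA hd)) (v 1))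
            (D0mul (DAmul hu (D0DA hd)) (decompL hv)),
          g6 u d v (Algebra.lmul K A (v 1)) (Algebra.lmul K A ((u * d) (v 1)))⟩
      | zero => exact ⟨0, DstarZero, 0, D0zero, by rw [map_zero]; exact (add_zero 0).symm⟩
      | add x y _ _ hx hy =>
        obtain ⟨s, hs, d, hd, rfl⟩ := hx
        obtain ⟨s', hs', d', hd', rfl⟩ := hy
        exact ⟨s + s', DstarAdd hs hs', d + d', D0add hd hd',
          by rw [map_add]; exact add_add_add_comm _ _ _ _⟩
      | neg x _ hx =>
        obtain ⟨s, hs, d, hd, rfl⟩ := hx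
        exact ⟨-s, DstarNeg hs, -d, D0neg hd, by rw [map_neg]; exact neg_add _ _⟩
    · rintro x ⟨s, hs, d, hd, rfl⟩
      exact DDadd (hLmem hs) (mem_of_eq (g13 d) (DDgen Lone hd Lone))
  refine ⟨?_, ?_, hii, ⟨⟨?_, ?_, ?_, ?_, ?_⟩, ?_, ?_⟩, ?_, ?_, stab⟩
  · -- (i) forward
    intro 𝔞 hstab hsub
    refine ⟨⟨?_, ?_, ?_, ?_, ?_⟩, ?_, ?_⟩
    · rintro x ⟨a, _, d, hd, rfl⟩
      exact DAadd (L0 a) (D0DA hd)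
    · exact ⟨0, 𝔞.zero_mem, 0, D0zero, by rw [map_zero]; exact (add_zero 0).symm⟩
    · rintro x ⟨a, ha, d, hd, rfl⟩ y ⟨b, hb, e, he, rfl⟩
      exact ⟨a + b, 𝔞.add_mem ha hb, d + e, D0add hd he,
        by rw [map_add]; exact add_add_add_comm _ _ _ _⟩
    · rintro x ⟨a, ha, d, hd, rfl⟩
      exact ⟨-a, 𝔞.neg_mem ha, -d, D0neg hd, by rw [map_neg]; exact neg_add _ _⟩
    · rintro t ht x ⟨a, ha, d, hd, rfl⟩
      refine ⟨⟨t a, hstab t ht a ha,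
          t * Algebra.lmul K A a - Algebra.lmul K A (t a) + t * d,
          D0add (keyL ht a) (D0mul ht hd),
          g4 t (Algebra.lmul K A a) d (Algebra.lmul K A (t a))⟩,
        ⟨a * t 1 + d (t 1),
          𝔞.add_mem (Ideal.mul_mem_right _ _ ha) (hsub (DstarGen hd (t 1))),
          Algebra.lmul K A a * (t - Algebra.lmul K A (t 1))
            + ((d * Algebra.lmul K A (t 1) - Algebra.lmul K A (d (t 1)))
              + d * (t - Algebra.lmul K A (t 1))),
          D0add (D0mul (L0 a) (decompL ht))
            (D0add (keyL (D0DA hd) (t 1)) (D0mul (D0DA hd) (decompL ht))), ?_⟩⟩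
      rw [map_add, map_mul]
      exact g5 (Algebra.lmul K A a) d t (Algebra.lmul K A (t 1)) (Algebra.lmul K A (d (t 1)))
    · intro d hd
      exact ⟨0, 𝔞.zero_mem, d, hd, by rw [map_zero]; exact (zero_add d).symm⟩
    · ext r
      constructor
      · rintro ⟨a, ha, d, hd, h⟩
        have h2 := DFunLike.congr_fun h (1 : A)
        rw [LinearMap.add_apply, lapp, lapp, D0app hd] at h2
        rw [mul_one r, mul_one a, add_zero a] at h2
        subst h2
        exact ha
      · intro hr
        exact ⟨r, hr, 0, D0zero, (add_zero (Algebra.lmul K A r)).symm⟩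
  · -- (i) inverse
    intro I hI hD0I
    obtain ⟨hIDA, hI0, hIadd, hIneg, hImul⟩ := hI
    refine ⟨{ carrier := {r : A | Algebra.lmul K A r ∈ I}
              add_mem' := ?_
              zero_mem' := ?_
              smul_mem' := ?_ }, rfl, ?_, ?_, ?_⟩
    · intro a b ha hb
      show Algebra.lmul K A (a + b) ∈ I
      exact mem_of_eq (map_add _ a b) (hIadd _ ha _ hb)
    · show Algebra.lmul K A (0 : A) ∈ I
      exact mem_of_eq (map_zero _) hI0
    · intro c x hx
      show Algebra.lmul K A (c * x) ∈ I
      exact mem_of_eq (map_mul _ c x) ((hImul _ (L0 c) _ hx).1)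
    · intro u hu a ha
      show Algebra.lmul K A (u a) ∈ I
      have h1 : u * Algebra.lmul K A a ∈ I := (hImul u hu _ ha).1
      have h2 : u * Algebra.lmul K A a - Algebra.lmul K A (u a) ∈ I := hD0I (keyL hu a)
      exact mem_of_eq (g9 (u * Algebra.lmul K A a) (Algebra.lmul K A (u a)))
        (hIadd _ h1 _ (hIneg _ h2))
    · intro x hx
      rw [hDstar] at hx
      replace hx : x ∈ AddSubgroup.closure {x : A | ∃ u ∈ D0, ∃ a : A, x = u a} := hx
      induction hx using AddSubgroup.closure_induction with
      | mem x hx =>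
        obtain ⟨d, hd, b, rfl⟩ := hx
        show Algebra.lmul K A (d b) ∈ I
        have h1 : d * Algebra.lmul K A b ∈ I := (hImul _ (L0 b) d (hD0I hd)).2
        have h2 : d * Algebra.lmul K A b - Algebra.lmul K A (d b) ∈ I :=
          hD0I (keyL (D0DA hd) b)
        exact mem_of_eq (g9 (d * Algebra.lmul K A b) (Algebra.lmul K A (d b)))
          (hIadd _ h1 _ (hIneg _ h2))
      | zero =>
        show Algebra.lmul K A (0 : A) ∈ I
        exact mem_of_eq (map_zero _) hI0
      | add x y _ _ hx hy =>
        show Algebra.lmul K A (x + y) ∈ I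
        exact mem_of_eq (map_add _ x y) (hIadd _ hx _ hy)
      | neg x _ hx =>
        show Algebra.lmul K A (-x) ∈ I
        exact mem_of_eq (map_neg _ x) (hIneg _ hx)
    · ext x
      constructor
      · intro hx
        have hxDA : x ∈ DA := hIDA hx
        have hx0 : x - Algebra.lmul K A (x 1) ∈ I := hD0I (decompL hxDA)
        have h1 : Algebra.lmul K A (x 1) ∈ I :=
          mem_of_eq (g9 x (Algebra.lmul K A (x 1))) (hIadd _ hx _ (hIneg _ hx0))
        exact ⟨x 1, h1, x - Algebra.lmul K A (x 1), decompL hxDA,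
          g11 x (Algebra.lmul K A (x 1))⟩
      · rintro ⟨a, ha, d, hd, rfl⟩
        exact hIadd _ ha _ (hD0I hd)
  · -- IsIdl: DD0D ⊆ DA
    intro x hx
    rw [hDD0D] at hx
    replace hx : x ∈ AddSubgroup.closure
        {x : Module.End K A | ∃ u ∈ DA, ∃ d ∈ D0, ∃ v ∈ DA, x = u * d * v} := hx
    induction hx using AddSubgroup.closure_induction with
    | mem x hx =>
      obtain ⟨u, hu, d, hd, v, hv, rfl⟩ := hx
      exact DAmul (DAmul hu (D0DA hd)) hv
    | zero => exact DAzero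
    | add x y _ _ hx hy => exact DAadd hx hy
    | neg x _ hx => exact DAneg hx
  · exact DDzero
  · intro x hx y hy; exact DDadd hx hy
  · intro x hx; exact DDneg hx
  · intro t ht x hx
    rw [hDD0D] at hx
    replace hx : x ∈ AddSubgroup.closure
        {x : Module.End K A | ∃ u ∈ DA, ∃ d ∈ D0, ∃ v ∈ DA, x = u * d * v} := hx
    induction hx using AddSubgroup.closure_induction with
    | mem x hx =>
      obtain ⟨u, hu, d, hd, v, hv, rfl⟩ := hx
      exact ⟨mem_of_eq (g16 t u d v) (DDgen (DAmul ht hu) hd hv),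
        mem_of_eq (g17 t u d v) (DDgen hu hd (DAmul hv ht))⟩
    | zero => exact ⟨mem_of_eq (g20 t) DDzero, mem_of_eq (g21 t) DDzero⟩
    | add x y _ _ hx hy =>
      exact ⟨mem_of_eq (g22 t x y) (DDadd hx.1 hy.1),
        mem_of_eq (g23 t x y) (DDadd hx.2 hy.2)⟩
    | neg x _ hx =>
      exact ⟨mem_of_eq (g18 t x) (DDneg hx.1), mem_of_eq (g19 t x) (DDneg hx.2)⟩
  · intro d hd
    exact mem_of_eq (g13 d) (DDgen Lone hd Lone)
  · -- least
    intro I hI hD0I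
    obtain ⟨hIDA, hI0, hIadd, hIneg, hImul⟩ := hI
    intro x hx
    rw [hDD0D] at hx
    replace hx : x ∈ AddSubgroup.closure
        {x : Module.End K A | ∃ u ∈ DA, ∃ d ∈ D0, ∃ v ∈ DA, x = u * d * v} := hx
    induction hx using AddSubgroup.closure_induction with
    | mem x hx =>
      obtain ⟨u, hu, d, hd, v, hv, rfl⟩ := hx
      exact (hImul v hv _ (hImul u hu d (hD0I hd)).1).2
    | zero => exact hI0
    | add x y _ _ hx hy => exact hIadd _ hx _ hy
    | neg x _ hx => exact hIneg _ hx
  · -- (iii) eq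
    ext r
    constructor
    · intro hr
      show Algebra.lmul K A r ∈ DD0D
      rw [hii]
      exact ⟨r, hr, 0, D0zero, (add_zero (Algebra.lmul K A r)).symm⟩
    · intro hr
      have hr' : Algebra.lmul K A r ∈ DD0D := hr
      rw [hii] at hr'
      obtain ⟨s, hs, d, hd, h⟩ := hr'
      have h2 := DFunLike.congr_fun h (1 : A)
      rw [LinearMap.add_apply, lapp, lapp, D0app hd] at h2
      rw [mul_one r, mul_one s, add_zero s] at h2
      subst h2
      exact hs
  · -- (iii) ideal
    refine ⟨{ carrier := Dstar
              add_mem' := ?_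
              zero_mem' := DstarZero
              smul_mem' := ?_ }, rfl⟩
    · intro a b ha hb; exact DstarAdd ha hb
    · intro c x hx
      exact mem_of_eq ((lapp c x).symm) (stab _ (L0 c) x hx)
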